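/- Let I be a homogeneous ideal of the weighted polynomial ring R. Then I is T-fixed (φ(I) = I for all φ ∈ T) if and only if I is a strongly stable monomial ideal. -/

import Mathlib

open MvPolynomial

/-- A monomial ideal of the weighted polynomial ring (weights `w`, variables listed by
increasing weight) is *strongly stable* if for every monomial `u ∈ I` and every variable
`X t` dividing `u`, both `X s · u / X t ∈ I` for every earlier variable `X s` of the same
weight (`s < t`, `w s = w t`), and `v · u / X t ∈ I` for every monomial `v` of weighted
degree `w t` in the variables of strictly smaller weight. -/
def StronglyStable {K : Type*} [Field K] {N : ℕ} (w : Fin N → ℕ)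
    (I : Ideal (MvPolynomial (Fin N) K)) : Prop :=
  (∃ A : Set (Fin N →₀ ℕ),
      I = Ideal.span ((fun μ => (monomial μ (1 : K) : MvPolynomial (Fin N) K)) '' A)) ∧
  ∀ μ : Fin N →₀ ℕ, (monomial μ (1 : K) : MvPolynomial (Fin N) K) ∈ I →
    ∀ t ∈ μ.support,
      (∀ s : Fin N, s < t → w s = w t →
        (monomial (μ - Finsupp.single t 1 + Finsupp.single s 1) (1 : K) :
          MvPolynomial (Fin N) K) ∈ I) ∧
      (∀ ν : Fin N →₀ ℕ, Finsupp.weight w ν = w t → (∀ s ∈ ν.support, w s < w t) →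
        (monomial (μ - Finsupp.single t 1 + ν) (1 : K) : MvPolynomial (Fin N) K) ∈ I)


section Aux
variable {K : Type*} [Field K] {N : ℕ}

lemma aeval_fix (t : Fin N) (F : Fin N → MvPolynomial (Fin N) K)
    (hF : ∀ i, i ≠ t → F i = X i) {p : MvPolynomial (Fin N) K}
    (hp : p ∈ MvPolynomial.supported K {s | s ≠ t}) : aeval F p = p := by
  rw [supported_eq_range_rename] at hp
  obtain ⟨q, rfl⟩ := (AlgHom.mem_range _).mp hp
  rw [aeval_rename]
  have h2 : (F ∘ (Subtype.val : {s : Fin N // s ∈ {s | s ≠ t}} → Fin N)) = fun i => X i.val := by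
    funext i; exact hF i.val i.property
  rw [h2]
  show (aeval (X ∘ Subtype.val)) q = _
  rw [← rename_eq_aeval]

noncomputable def addEquiv (t : Fin N) (m : MvPolynomial (Fin N) K)
    (hm : m ∈ MvPolynomial.supported K {s | s ≠ t}) :
    MvPolynomial (Fin N) K ≃ₐ[K] MvPolynomial (Fin N) K := by
  classical
  refine AlgEquiv.ofAlgHom
    (aeval (fun i => if i = t then X t + m else X i))
    (aeval (fun i => if i = t then X t - m else X i)) ?_ ?_
  · apply MvPolynomial.algHom_ext
    intro i
    by_cases hi : i = t
    · subst hi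
      simp only [AlgHom.comp_apply, aeval_X, eq_self_iff_true, if_true, map_sub, map_add]
      rw [aeval_fix i _ (fun j hj => by simp [hj]) hm]
      simp
    · simp [hi]
  · apply MvPolynomial.algHom_ext
    intro i
    by_cases hi : i = t
    · subst hi
      simp only [AlgHom.comp_apply, aeval_X, eq_self_iff_true, if_true, map_add, map_sub]
      rw [aeval_fix i _ (fun j hj => by simp [hj]) hm]
      simp
    · simp [hi]

lemma addEquiv_apply (t : Fin N) (m : MvPolynomial (Fin N) K) (hm) (p) :
    (addEquiv t m hm : MvPolynomial (Fin N) K ≃ₐ[K] _) p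
      = aeval (fun i => if i = t then X t + m else X i) p := rfl

noncomputable def scaleEquiv (j : Fin N) (c : K) (hc : c ≠ 0) :
    MvPolynomial (Fin N) K ≃ₐ[K] MvPolynomial (Fin N) K := by
  classical
  refine AlgEquiv.ofAlgHom
    (aeval (fun i => if i = j then C c * X j else X i))
    (aeval (fun i => if i = j then C c⁻¹ * X j else X i)) ?_ ?_
  · apply MvPolynomial.algHom_ext
    intro i
    by_cases hi : i = j
    · subst hi
      simp only [AlgHom.comp_apply, aeval_X, eq_self_iff_true, if_true, AlgHom.coe_id, id_eq]
      rw [map_mul, aeval_C, aeval_X, if_pos rfl, algebraMap_eq, ← mul_assoc, ← map_mul,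
        inv_mul_cancel₀ hc, map_one, one_mul]
    · simp [hi]
  · apply MvPolynomial.algHom_ext
    intro i
    by_cases hi : i = j
    · subst hi
      simp only [AlgHom.comp_apply, aeval_X, eq_self_iff_true, if_true, AlgHom.coe_id, id_eq]
      rw [map_mul, aeval_C, aeval_X, if_pos rfl, algebraMap_eq, ← mul_assoc, ← map_mul,
        mul_inv_cancel₀ hc, map_one, one_mul]
    · simp [hi]

lemma scaleEquiv_apply (j : Fin N) (c : K) (hc) (p) :
    (scaleEquiv j c hc : MvPolynomial (Fin N) K ≃ₐ[K] _) p
      = aeval (fun i => if i = j then C c * X j else X i) p := rfl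

lemma vandermonde_extract [CharZero K] {V : Type*} [AddCommGroup V] [Module K V]
    (p : Submodule K V) {n : ℕ} (v : Fin n → V)
    (h : ∀ c : K, c ≠ 0 → (∑ k : Fin n, c ^ (k : ℕ) • v k) ∈ p) :
    ∀ k, v k ∈ p := by
  classical
  intro k
  set W : Matrix (Fin n) (Fin n) K := Matrix.vandermonde (fun i => ((i : ℕ) + 1 : K)) with hW
  have hdet : IsUnit W.det := by
    rw [hW, Matrix.det_vandermonde]
    rw [isUnit_iff_ne_zero, Finset.prod_ne_zero_iff]
    intro i _
    rw [Finset.prod_ne_zero_iff]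
    intro j hj
    rw [Finset.mem_Ioi] at hj
    rw [sub_ne_zero]
    intro hh
    exact hj.ne' (Fin.val_injective (Nat.cast_injective (add_right_cancel hh)))
  have hWmem : ∀ i, (∑ l : Fin n, W i l • v l) ∈ p := by
    intro i
    have := h ((i : ℕ) + 1 : K) (Nat.cast_add_one_ne_zero (i : ℕ))
    simpa [hW, Matrix.vandermonde] using this
  have key : v k = ∑ i : Fin n, (W⁻¹ k i) • (∑ l : Fin n, W i l • v l) := by
    have : ∀ i, (W⁻¹ k i) • (∑ l : Fin n, W i l • v l)
        = ∑ l : Fin n, (W⁻¹ k i * W i l) • v l := by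
      intro i; rw [Finset.smul_sum]; simp [smul_smul]
    simp_rw [this]
    rw [Finset.sum_comm]
    have : ∀ l, (∑ i : Fin n, (W⁻¹ k i * W i l) • v l) = ((W⁻¹ * W) k l) • v l := by
      intro l; rw [← Finset.sum_smul, Matrix.mul_apply]
    simp_rw [this, Matrix.nonsing_inv_mul W hdet]
    simp [Matrix.one_apply]
  rw [key]
  exact Submodule.sum_mem p fun i _ => Submodule.smul_mem p _ (hWmem i)


section Part
variable (j : Fin N) (k : ℕ) (f : MvPolynomial (Fin N) K)

/-- the part of `f` of degree `k` in variable `j` -/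
noncomputable def part : MvPolynomial (Fin N) K :=
  letI := Classical.decEq K
  ∑ μ ∈ f.support.filter (fun μ => μ j = k), monomial μ (coeff μ f)

lemma coeff_part (ρ : Fin N →₀ ℕ) :
    coeff ρ (part j k f) = if ρ j = k then coeff ρ f else 0 := by
  classical
  rw [part]
  rw [coeff_sum]
  simp_rw [coeff_monomial]
  rw [Finset.sum_ite_eq' (f.support.filter (fun μ => μ j = k)) ρ (fun μ => coeff μ f)]
  by_cases h1 : ρ j = k
  · by_cases h2 : ρ ∈ f.support
    · rw [if_pos (Finset.mem_filter.mpr ⟨h2, h1⟩), if_pos h1]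
    · rw [if_pos h1, notMem_support_iff.mp h2, ite_self]
  · rw [if_neg (fun hc : ρ ∈ Finset.filter (fun μ => μ j = k) f.support => h1 (Finset.mem_filter.mp hc).2), if_neg h1]

lemma support_part_subset :
    (part j k f).support ⊆ f.support.filter (fun μ => μ j = k) := by
  classical
  intro ρ hρ
  rw [mem_support_iff, coeff_part] at hρ
  by_cases h1 : ρ j = k
  · rw [if_pos h1] at hρ
    exact Finset.mem_filter.mpr ⟨mem_support_iff.mpr hρ, h1⟩
  · rw [if_neg h1] at hρ; exact absurd rfl hρ

end Part

lemma scale_monomial (j : Fin N) (c : K) (hc : c ≠ 0) (μ : Fin N →₀ ℕ) (a : K) :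
    (scaleEquiv j c hc) (monomial μ a) = c ^ (μ j) • monomial μ a := by
  classical
  rw [scaleEquiv_apply, aeval_monomial]
  have hp : (μ.prod fun i k => (fun i => if i = j then C c * X j else X i) i ^ k)
      = C (c ^ μ j) * (μ.prod fun i k => (X i : MvPolynomial (Fin N) K) ^ k) := by
    rw [Finsupp.prod_fintype _ _ (fun i => pow_zero _),
      Finsupp.prod_fintype _ _ (fun i => pow_zero _)]
    have : ∀ i : Fin N, (if i = j then C c * X j else X i) ^ μ i
        = (if i = j then C (c ^ μ j) else 1) * (X i : MvPolynomial (Fin N) K) ^ μ i := by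
      intro i
      by_cases hi : i = j
      · subst hi; rw [if_pos rfl, if_pos rfl, mul_pow, C_pow]
      · rw [if_neg hi, if_neg hi, one_mul]
    simp_rw [this]
    rw [Finset.prod_mul_distrib, Finset.prod_ite_eq' Finset.univ j
      (fun _ => C (c ^ μ j) : Fin N → MvPolynomial (Fin N) K), if_pos (Finset.mem_univ j)]
  rw [hp, algebraMap_eq, ← mul_assoc, mul_comm (C a), mul_assoc, ← monomial_eq, ← C_mul',
    ← smul_eq_C_mul]

lemma scale_eq_sum_part (j : Fin N) (c : K) (hc : c ≠ 0) (f : MvPolynomial (Fin N) K)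
    (D : ℕ) (hD : ∀ μ ∈ f.support, μ j < D) :
    (scaleEquiv j c hc) f = ∑ k : Fin D, c ^ (k : ℕ) • part j (k : ℕ) f := by
  classical
  conv_lhs => rw [f.as_sum]
  rw [map_sum]
  simp_rw [scale_monomial]
  rw [← Finset.sum_range (fun k => c ^ k • part j k f)]
  rw [← Finset.sum_fiberwise_of_maps_to (g := fun μ => μ j) (t := Finset.range D)
    (fun μ hμ => Finset.mem_range.mpr (hD μ hμ))]
  apply Finset.sum_congr rfl
  intro k _
  rw [part, Finset.smul_sum]
  apply Finset.sum_congr rfl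
  intro μ hμ
  rw [(Finset.mem_filter.mp hμ).2]

section Extract
variable [CharZero K] (w : Fin N → ℕ) (I : Ideal (MvPolynomial (Fin N) K))

-- abbreviation for the fixedness hypothesis
variable (hfix : ∀ φ : MvPolynomial (Fin N) K ≃ₐ[K] MvPolynomial (Fin N) K,
      (∃ (a : Matrix (Fin N) (Fin N) K) (ψ : Fin N → MvPolynomial (Fin N) K),
        IsUnit a ∧
        (∀ t s, w t ≠ w s → a t s = 0) ∧
        (∀ t s, t < s → a t s = 0) ∧
        (∀ t, (ψ t).IsWeightedHomogeneous w (w t) ∧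
          ψ t ∈ MvPolynomial.supported K {s : Fin N | w s < w t}) ∧
        (∀ t, φ (X t) = (∑ s, C (a t s) * X s) + ψ t)) →
      Ideal.map φ.toAlgHom I = I)

include hfix

lemma scale_fix (j : Fin N) (c : K) (hc : c ≠ 0) :
    Ideal.map (scaleEquiv j c hc).toAlgHom I = I := by
  classical
  apply hfix
  refine ⟨Matrix.diagonal (fun i => if i = j then c else 1), 0, ?_, ?_, ?_, ?_, ?_⟩
  · rw [Matrix.isUnit_iff_isUnit_det, Matrix.det_diagonal, isUnit_iff_ne_zero]
    apply Finset.prod_ne_zero_iff.mpr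
    intro i _
    split <;> simp [hc]
  · intro t s h
    by_cases hts : t = s
    · subst hts; exact absurd rfl h
    · exact Matrix.diagonal_apply_ne _ hts
  · intro t s h
    exact Matrix.diagonal_apply_ne _ h.ne
  · intro t
    exact ⟨isWeightedHomogeneous_zero K w (w t), Subalgebra.zero_mem _⟩
  · intro t
    rw [Pi.zero_apply, add_zero]
    show (aeval fun i => if i = j then C c * X j else X i) (X t) = _
    rw [aeval_X]
    rw [Finset.sum_eq_single t]
    · rw [Matrix.diagonal_apply_eq]
      by_cases ht : t = j
      · subst ht; rw [if_pos rfl, if_pos rfl]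
      · rw [if_neg ht, if_neg ht, map_one, one_mul]
    · intro s _ hs
      rw [Matrix.diagonal_apply_ne' _ hs, map_zero, zero_mul]
    · intro h; exact absurd (Finset.mem_univ t) h

lemma part_mem (f : MvPolynomial (Fin N) K) (hf : f ∈ I) (j : Fin N) (k : ℕ) :
    part j k f ∈ I := by
  classical
  set D := (f.support.sup fun μ => μ j) + 1 with hD
  by_cases hk : k < D
  · have hmem : ∀ c : K, c ≠ 0 →
        (∑ l : Fin D, c ^ (l : ℕ) • part j (l : ℕ) f) ∈ Submodule.restrictScalars K I := by
      intro c hc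
      rw [← scale_eq_sum_part j c hc f D
        (fun μ hμ => Nat.lt_succ_of_le (Finset.le_sup (f := fun μ => μ j) hμ))]
      have := Ideal.mem_map_of_mem (scaleEquiv j c hc).toAlgHom hf
      rw [scale_fix w I hfix j c hc] at this
      exact this
    have := vandermonde_extract (Submodule.restrictScalars K I)
      (fun l : Fin D => part j (l : ℕ) f) hmem ⟨k, hk⟩
    exact this
  · push_neg at hk
    rw [part]
    rw [Finset.filter_false_of_mem, Finset.sum_empty]
    · exact Ideal.zero_mem I
    · intro μ hμ
      have : μ j < D := Nat.lt_succ_of_le (Finset.le_sup (f := fun μ => μ j) hμ)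
      omega

lemma monomial_coeff_mem (f : MvPolynomial (Fin N) K) (hf : f ∈ I) (μ : Fin N →₀ ℕ) :
    monomial μ (coeff μ f) ∈ I := by
  classical
  -- strong induction on the size of the support
  suffices h : ∀ n : ℕ, ∀ f : MvPolynomial (Fin N) K, f ∈ I → f.support.card ≤ n →
      ∀ μ, monomial μ (coeff μ f) ∈ I from h f.support.card f hf le_rfl μ
  clear hf f μ
  intro n
  induction n with
  | zero =>
    intro f hf hcard μ
    have : f = 0 := by
      rw [← support_eq_empty, ← Finset.card_eq_zero]; omega
    rw [this, coeff_zero, map_zero]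
    exact Ideal.zero_mem I
  | succ n IH =>
    intro f hf hcard μ
    by_cases hμ : μ ∈ f.support
    swap
    · rw [notMem_support_iff.mp hμ, map_zero]; exact Ideal.zero_mem I
    by_cases hc1 : f.support.card ≤ 1
    · have hsingle : f.support = {μ} := by
        apply Finset.eq_singleton_iff_unique_mem.mpr
        refine ⟨hμ, fun ρ hρ => ?_⟩
        by_contra hne
        have := Finset.one_lt_card.mpr ⟨ρ, hρ, μ, hμ, hne⟩
        omega
      have : f = monomial μ (coeff μ f) := by
        conv_lhs => rw [f.as_sum, hsingle, Finset.sum_singleton]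
      rw [← this]; exact hf
    · push_neg at hc1
      obtain ⟨μ₁, hμ₁, μ₂, hμ₂, hne⟩ := Finset.one_lt_card.mp hc1
      have hj : ∃ j, μ₁ j ≠ μ₂ j := by
        by_contra hcon
        push_neg at hcon
        exact hne (Finsupp.ext hcon)
      obtain ⟨j, hj⟩ := hj
      set g := part j (μ j) f with hg
      have hgI : g ∈ I := part_mem w I hfix f hf j (μ j)
      have hcoeff : coeff μ g = coeff μ f := by rw [hg, coeff_part, if_pos rfl]
      have hsub : g.support ⊆ f.support.filter (fun ρ => ρ j = μ j) :=
        support_part_subset j (μ j) f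
      -- one of μ₁, μ₂ is not in the filter
      have hlt : g.support.card ≤ n := by
        have hssub : g.support ⊆ f.support := hsub.trans (Finset.filter_subset _ _)
        have : ∃ ρ ∈ f.support, ρ ∉ g.support := by
          by_cases h1 : μ₁ j = μ j
          · refine ⟨μ₂, hμ₂, fun hmem => ?_⟩
            have := (Finset.mem_filter.mp (hsub hmem)).2
            exact hj (h1.trans this.symm)
          · exact ⟨μ₁, hμ₁, fun hmem => h1 (Finset.mem_filter.mp (hsub hmem)).2⟩
        obtain ⟨ρ, hρf, hρg⟩ := this
        have : g.support ⊆ f.support.erase ρ := fun x hx =>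
          Finset.mem_erase.mpr ⟨fun he => hρg (he ▸ hx), hssub hx⟩
        have h2 := Finset.card_le_card this
        have h3 := Finset.card_erase_of_mem hρf
        omega
      have := IH g hgI hlt μ
      rwa [hcoeff] at this
end Extract

section Elem
variable [CharZero K] (I : Ideal (MvPolynomial (Fin N) K))

lemma mono_mem_of_coeff (hmono : ∀ f ∈ I, ∀ μ, monomial μ (coeff μ f) ∈ I)
    {f : MvPolynomial (Fin N) K} (hf : f ∈ I) {μ : Fin N →₀ ℕ} (h : coeff μ f ≠ 0) :
    monomial μ (1 : K) ∈ I := by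
  have h1 := hmono f hf μ
  have : monomial μ (1 : K) = C (coeff μ f)⁻¹ * monomial μ (coeff μ f) := by
    rw [C_mul_monomial, inv_mul_cancel₀ h]
  rw [this]
  exact I.mul_mem_left _ h1

lemma supported_of_apply_eq_zero {ν : Fin N →₀ ℕ} {t : Fin N} (hν : ν t = 0) :
    (monomial ν (1 : K)) ∈ MvPolynomial.supported K {s : Fin N | s ≠ t} := by
  rw [mem_supported, vars_monomial one_ne_zero]
  intro s hs
  intro hst
  exact absurd hν (by rw [← hst]; exact Finsupp.mem_support_iff.mp hs)

lemma elem_move (hmono : ∀ f ∈ I, ∀ μ, monomial μ (coeff μ f) ∈ I)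
    (t : Fin N) (ν : Fin N →₀ ℕ) (hν : ν t = 0)
    (hfixφ : Ideal.map (addEquiv t (monomial ν 1)
        (supported_of_apply_eq_zero hν)).toAlgHom I = I)
    (μ : Fin N →₀ ℕ) (hμI : monomial μ (1 : K) ∈ I) (hμt : μ t ≠ 0) :
    monomial (μ - Finsupp.single t 1 + ν) (1 : K) ∈ I := by
  classical
  set φ := addEquiv t (monomial ν (1:K)) (supported_of_apply_eq_zero hν) with hφ
  set n := μ t with hn
  set ρ := Finsupp.erase t μ with hρ
  have hρt : ρ t = 0 := Finsupp.erase_same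
  have hsplit : monomial μ (1 : K) = X t ^ n * monomial ρ 1 := by
    rw [X_pow_eq_monomial, monomial_mul, one_mul, Finsupp.single_add_erase]
  -- image of the monomial under φ
  have hφρ : φ (monomial ρ (1:K)) = monomial ρ 1 := by
    rw [hφ, addEquiv_apply]
    exact aeval_fix t _ (fun i hi => by simp [hi]) (supported_of_apply_eq_zero hρt)
  have hφX : φ (X t) = X t + monomial ν 1 := by
    rw [hφ, addEquiv_apply, aeval_X, if_pos rfl]
  have himg : φ (monomial μ (1:K)) =
      ∑ k ∈ Finset.range (n + 1),
        monomial (Finsupp.single t k + (n - k) • ν + ρ) ((n.choose k : K)) := by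
    rw [hsplit, map_mul, map_pow, hφX, hφρ, add_pow, Finset.sum_mul]
    apply Finset.sum_congr rfl
    intro k _
    rw [X_pow_eq_monomial, monomial_pow, one_pow,
      ← map_natCast (C : K →+* MvPolynomial (Fin N) K) (n.choose k), C_apply]
    simp only [monomial_mul]
    congr 1
    · abel
    · ring
  set τ := μ - Finsupp.single t 1 + ν with hτ
  have hτt : τ t = n - 1 := by
    rw [hτ, Finsupp.add_apply, Finsupp.tsub_apply, Finsupp.single_eq_same, hν, add_zero]
  have hcoeff : coeff τ (φ (monomial μ (1:K))) = (n.choose (n-1) : K) := by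
    rw [himg, coeff_sum]
    rw [Finset.sum_eq_single (n - 1)]
    · rw [coeff_monomial, if_pos]
      rw [hτ]
      ext i
      by_cases hi : i = t
      · subst hi
        simp only [Finsupp.add_apply, Finsupp.smul_apply, Finsupp.single_eq_same,
          Finsupp.tsub_apply, hν, hρt, smul_eq_mul]
        omega
      · simp only [Finsupp.add_apply, Finsupp.smul_apply, Finsupp.tsub_apply,
          Finsupp.single_eq_of_ne' (fun h => hi h.symm), smul_eq_mul]
        rw [hρ, Finsupp.erase_ne hi]
        have : n - (n - 1) = 1 := by omega
        rw [this, one_mul]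
        omega
    · intro k hk hkne
      rw [coeff_monomial, if_neg]
      intro hcon
      apply hkne
      have h2 : (Finsupp.single t k + (n - k) • ν + ρ) t = τ t := by rw [hcon]
      simp only [Finsupp.add_apply, Finsupp.smul_apply, Finsupp.single_eq_same, hν, hρt,
        smul_eq_mul, mul_zero, add_zero] at h2
      rw [hτt] at h2
      exact h2
    · intro hmem
      exact absurd (Finset.mem_range.mpr (by omega)) hmem
  have hne : (n.choose (n-1) : K) ≠ 0 := by
    have h3 : n.choose (n - 1) = n := by
      rw [← Nat.choose_symm (Nat.sub_le n 1), show n - (n - 1) = 1 by omega,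
        Nat.choose_one_right]
    rw [h3]
    exact Nat.cast_ne_zero.mpr hμt
  have hin : φ (monomial μ (1:K)) ∈ I := by
    have := Ideal.mem_map_of_mem φ.toAlgHom hμI
    rwa [hfixφ] at this
  have := mono_mem_of_coeff I hmono hin (hcoeff ▸ hne)
  exact this
end Elem

section Certificates
variable [CharZero K] (w : Fin N → ℕ) (I : Ideal (MvPolynomial (Fin N) K))

lemma sum_C_one (i : Fin N) :
    (∑ s' : Fin N, C ((1 : Matrix (Fin N) (Fin N) K) i s') * X s')
      = (X i : MvPolynomial (Fin N) K) := by
  classical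
  rw [Finset.sum_eq_single i]
  · rw [Matrix.one_apply_eq, map_one, one_mul]
  · intro s _ hs
    rw [Matrix.one_apply_ne' hs, map_zero, zero_mul]
  · intro h; exact absurd (Finset.mem_univ i) h

variable (hfix : ∀ φ : MvPolynomial (Fin N) K ≃ₐ[K] MvPolynomial (Fin N) K,
      (∃ (a : Matrix (Fin N) (Fin N) K) (ψ : Fin N → MvPolynomial (Fin N) K),
        IsUnit a ∧
        (∀ t s, w t ≠ w s → a t s = 0) ∧
        (∀ t s, t < s → a t s = 0) ∧
        (∀ t, (ψ t).IsWeightedHomogeneous w (w t) ∧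
          ψ t ∈ MvPolynomial.supported K {s : Fin N | w s < w t}) ∧
        (∀ t, φ (X t) = (∑ s, C (a t s) * X s) + ψ t)) →
      Ideal.map φ.toAlgHom I = I)

include hfix

/-- certificate for `X t ↦ X t + X s`, `s < t`, `w s = w t` -/
lemma elem_fix_same_weight {t s : Fin N} (hst : s < t) (hw : w s = w t) (hm) :
    Ideal.map (addEquiv t (monomial (Finsupp.single s 1) (1:K)) hm).toAlgHom I = I := by
  classical
  apply hfix
  set E := Matrix.single t s (1 : K) with hE
  have hEmul : E * E = 0 := by rw [hE]; simp [hst.ne]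
  refine ⟨1 + E, 0, ?_, ?_, ?_, ?_, ?_⟩
  · refine ⟨⟨1 + E, 1 - E, ?_, ?_⟩, rfl⟩
    · show (1 + E) * (1 - E) = 1
      rw [mul_sub, mul_one, add_mul, one_mul, hEmul]; abel
    · show (1 - E) * (1 + E) = 1
      rw [sub_mul, one_mul, mul_add, mul_one, hEmul]; abel
  · intro t' s' h
    rw [Matrix.add_apply]
    have h1 : (1 : Matrix (Fin N) (Fin N) K) t' s' = 0 :=
      Matrix.one_apply_ne (fun he => h (by rw [he]))
    have h2 : E t' s' = 0 := by
      rw [hE]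
      by_cases ht' : t' = t
      · subst ht'
        by_cases hs' : s' = s
        · subst hs'; exact absurd (hw.symm) h
        · exact Matrix.single_apply_of_ne _ _ _ _ _ (by tauto)
      · exact Matrix.single_apply_of_ne _ _ _ _ _ (by tauto)
    rw [h1, h2, add_zero]
  · intro t' s' h
    rw [Matrix.add_apply]
    have h1 : (1 : Matrix (Fin N) (Fin N) K) t' s' = 0 := Matrix.one_apply_ne h.ne
    have h2 : E t' s' = 0 := by
      rw [hE]
      apply Matrix.single_apply_of_ne
      rintro ⟨rfl, rfl⟩
      exact absurd (hst.trans h) (lt_irrefl _)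
    rw [h1, h2, add_zero]
  · intro t'
    exact ⟨isWeightedHomogeneous_zero K w (w t'), Subalgebra.zero_mem _⟩
  · intro i
    rw [Pi.zero_apply, add_zero, addEquiv_apply, aeval_X]
    simp_rw [Matrix.add_apply, map_add, add_mul, Finset.sum_add_distrib, sum_C_one]
    have h2 : (∑ s' : Fin N, C (E i s') * X s')
        = if i = t then (X s : MvPolynomial (Fin N) K) else 0 := by
      rw [Finset.sum_eq_single s]
      · by_cases hi : i = t
        · subst hi
          rw [hE, Matrix.single_apply_same, map_one, one_mul, if_pos rfl]
        · rw [hE, Matrix.single_apply_of_ne _ _ _ _ _ (by tauto), map_zero, zero_mul,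
            if_neg hi]
      · intro s' _ hs'
        rw [hE, Matrix.single_apply_of_ne _ _ _ _ _ (by tauto), map_zero, zero_mul]
      · intro h; exact absurd (Finset.mem_univ s) h
    rw [h2]
    by_cases hi : i = t
    · subst hi
      rw [if_pos rfl, if_pos rfl]
      rfl
    · rw [if_neg hi, if_neg hi, add_zero]

/-- certificate for `X t ↦ X t + (monomial ν 1)` with `ν` of weight `w t` in smaller
weight variables -/
lemma elem_fix_small {t : Fin N} {ν : Fin N →₀ ℕ} (hwν : Finsupp.weight w ν = w t)
    (hsm : ∀ s ∈ ν.support, w s < w t) (hm) :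
    Ideal.map (addEquiv t (monomial ν (1:K)) hm).toAlgHom I = I := by
  classical
  apply hfix
  refine ⟨1, fun i => if i = t then monomial ν 1 else 0, isUnit_one, ?_, ?_, ?_, ?_⟩
  · intro t' s' h
    exact Matrix.one_apply_ne (fun he => h (by rw [he]))
  · intro t' s' h
    exact Matrix.one_apply_ne h.ne
  · intro i
    by_cases hi : i = t
    · subst hi
      simp only [eq_self_iff_true, if_true]
      refine ⟨isWeightedHomogeneous_monomial _ _ _ hwν, ?_⟩
      rw [mem_supported, vars_monomial one_ne_zero]
      exact fun s hs => hsm s hs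
    · simp only [hi, if_false]
      exact ⟨isWeightedHomogeneous_zero K w (w i), Subalgebra.zero_mem _⟩
  · intro i
    rw [sum_C_one, addEquiv_apply, aeval_X]
    by_cases hi : i = t
    · subst hi; simp
    · simp [hi]

end Certificates


section Forward
variable [CharZero K] (w : Fin N → ℕ) (I : Ideal (MvPolynomial (Fin N) K))

variable (hfix : ∀ φ : MvPolynomial (Fin N) K ≃ₐ[K] MvPolynomial (Fin N) K,
      (∃ (a : Matrix (Fin N) (Fin N) K) (ψ : Fin N → MvPolynomial (Fin N) K),
        IsUnit a ∧
        (∀ t s, w t ≠ w s → a t s = 0) ∧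
        (∀ t s, t < s → a t s = 0) ∧
        (∀ t, (ψ t).IsWeightedHomogeneous w (w t) ∧
          ψ t ∈ MvPolynomial.supported K {s : Fin N | w s < w t}) ∧
        (∀ t, φ (X t) = (∑ s, C (a t s) * X s) + ψ t)) →
      Ideal.map φ.toAlgHom I = I)

include hfix

lemma forward_dir : StronglyStable w I := by
  classical
  have hmono : ∀ f ∈ I, ∀ μ, monomial μ (coeff μ f) ∈ I := monomial_coeff_mem w I hfix
  constructor
  · refine ⟨{μ | monomial μ (1:K) ∈ I}, le_antisymm ?_ ?_⟩
    · intro f hf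
      nth_rw 1 [f.as_sum]
      apply Submodule.sum_mem
      intro μ hμ
      by_cases hc : coeff μ f = 0
      · rw [hc, map_zero]; exact Submodule.zero_mem _
      · have h1 : monomial μ (coeff μ f) = C (coeff μ f) * monomial μ (1:K) := by
          rw [C_mul_monomial, mul_one]
        rw [h1]
        exact Ideal.mul_mem_left _ _ (Ideal.subset_span
          ⟨μ, mono_mem_of_coeff I hmono hf hc, rfl⟩)
    · rw [Ideal.span_le]
      rintro g ⟨μ, hμ, rfl⟩
      exact hμ
  · intro μ hμI t ht
    have hμt : μ t ≠ 0 := Finsupp.mem_support_iff.mp ht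
    constructor
    · intro s hst hws
      have hν : (Finsupp.single s (1:ℕ)) t = 0 := Finsupp.single_eq_of_ne' hst.ne
      exact elem_move I hmono t _ hν
        (elem_fix_same_weight w I hfix hst hws _) μ hμI hμt
    · intro ν hwν hsm
      have hν : ν t = 0 := by
        by_contra h
        exact absurd (hsm t (Finsupp.mem_support_iff.mpr h)) (lt_irrefl _)
      exact elem_move I hmono t ν hν (elem_fix_small w I hfix hwν hsm _) μ hμI hμt
end Forward

section Backward
variable [CharZero K] (w : Fin N → ℕ) (I : Ideal (MvPolynomial (Fin N) K))

lemma iwh_pow {p : MvPolynomial (Fin N) K} {m : ℕ} (h : p.IsWeightedHomogeneous w m) (n : ℕ) :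
    (p ^ n).IsWeightedHomogeneous w (n * m) := by
  induction n with
  | zero => rw [pow_zero, Nat.zero_mul]; exact isWeightedHomogeneous_one K w
  | succ n IH =>
    rw [pow_succ, Nat.succ_mul]
    exact IH.mul h

/-- admissible replacement exponents for variable `t` -/
def Adm (t : Fin N) (ν : Fin N →₀ ℕ) : Prop :=
  (∃ s : Fin N, s ≤ t ∧ w s = w t ∧ ν = Finsupp.single s 1) ∨
  (Finsupp.weight w ν = w t ∧ ∀ s ∈ ν.support, w s < w t)

lemma adm_step (hSS : StronglyStable w I) {t : Fin N} {ν : Fin N →₀ ℕ} (hAdm : Adm w t ν)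
    {μ : Fin N →₀ ℕ} (hμ : monomial μ (1:K) ∈ I) (hμt : μ t ≠ 0) :
    monomial (μ - Finsupp.single t 1 + ν) (1:K) ∈ I := by
  have ht : t ∈ μ.support := Finsupp.mem_support_iff.mpr hμt
  rcases hAdm with ⟨s, hle, hws, rfl⟩ | ⟨hwν, hsm⟩
  · rcases eq_or_lt_of_le hle with rfl | hlt
    · have : μ - Finsupp.single s 1 + Finsupp.single s 1 = μ := by
        ext i
        by_cases hi : i = s
        · subst hi
          simp only [Finsupp.add_apply, Finsupp.tsub_apply, Finsupp.single_eq_same]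
          omega
        · simp only [Finsupp.add_apply, Finsupp.tsub_apply,
            Finsupp.single_eq_of_ne' (fun h => hi h.symm), add_zero, Nat.sub_zero]
      rw [this]; exact hμ
    · exact ((hSS.2 μ hμ t ht).1 s hlt hws)
  · exact (hSS.2 μ hμ t ht).2 ν hwν hsm

variable (φ : MvPolynomial (Fin N) K ≃ₐ[K] MvPolynomial (Fin N) K)
  (a : Matrix (Fin N) (Fin N) K) (ψ : Fin N → MvPolynomial (Fin N) K)
  (hw0 : ∀ t s, w t ≠ w s → a t s = 0)
  (htri : ∀ t s, t < s → a t s = 0)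
  (hψ : ∀ t, (ψ t).IsWeightedHomogeneous w (w t) ∧
          ψ t ∈ MvPolynomial.supported K {s : Fin N | w s < w t})
  (hφX : ∀ t, φ (X t) = (∑ s, C (a t s) * X s) + ψ t)

include hw0 hφX hψ in
lemma phiX_hom (t : Fin N) : (φ (X t)).IsWeightedHomogeneous w (w t) := by
  rw [hφX t]
  apply IsWeightedHomogeneous.add _ (hψ t).1
  apply IsWeightedHomogeneous.sum
  intro s _
  by_cases h : a t s = 0
  · rw [h, map_zero, zero_mul]; exact isWeightedHomogeneous_zero K w _
  · have hws : w t = w s := by by_contra hc; exact h (hw0 t s hc)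
    rw [hws]
    have := (isWeightedHomogeneous_C w (a t s)).mul (isWeightedHomogeneous_X K w s)
    rwa [zero_add] at this

include hw0 hφX hψ in
lemma phi_mono_hom (μ : Fin N →₀ ℕ) (c : K) :
    (φ (monomial μ c)).IsWeightedHomogeneous w (Finsupp.weight w μ) := by
  have h1 : monomial μ c = C c * ∏ i, (X i : MvPolynomial (Fin N) K) ^ μ i := by
    rw [monomial_eq, Finsupp.prod_fintype _ _ (fun i => pow_zero _)]
  rw [h1, map_mul, map_prod]
  simp_rw [map_pow]
  have h2 : (Finsupp.weight w μ) = 0 + ∑ i, μ i * w i := by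
    rw [zero_add, Finsupp.weight_apply,
      Finsupp.sum_fintype μ (fun i c => c • w i) (fun i => zero_smul ℕ (w i))]
    simp [smul_eq_mul]
  rw [h2]
  apply IsWeightedHomogeneous.mul
  · have : φ (C c) = C c := by
      rw [← algebraMap_eq]; exact φ.commutes c
    rw [this]; exact isWeightedHomogeneous_C w c
  · exact IsWeightedHomogeneous.prod _ _ _
      (fun i _ => iwh_pow w (phiX_hom w φ a ψ hw0 hψ hφX i) (μ i))

include hw0 hφX hψ in
lemma phi_hom {d : ℕ} {p : MvPolynomial (Fin N) K} (hp : p.IsWeightedHomogeneous w d) :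
    (φ p).IsWeightedHomogeneous w d := by
  conv_lhs => rw [p.as_sum]
  rw [map_sum]
  apply IsWeightedHomogeneous.sum
  intro μ hμ
  have := phi_mono_hom w φ a ψ hw0 hψ hφX μ (coeff μ p)
  rwa [hp (mem_support_iff.mp hμ)] at this
end Backward

section Backward2
variable [CharZero K] (w : Fin N → ℕ) (I : Ideal (MvPolynomial (Fin N) K))
  (φ : MvPolynomial (Fin N) K ≃ₐ[K] MvPolynomial (Fin N) K)
  (a : Matrix (Fin N) (Fin N) K) (ψ : Fin N → MvPolynomial (Fin N) K)
  (hw0 : ∀ t s, w t ≠ w s → a t s = 0)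
  (htri : ∀ t s, t < s → a t s = 0)
  (hψ : ∀ t, (ψ t).IsWeightedHomogeneous w (w t) ∧
          ψ t ∈ MvPolynomial.supported K {s : Fin N | w s < w t})
  (hφX : ∀ t, φ (X t) = (∑ s, C (a t s) * X s) + ψ t)

include hw0 htri hψ hφX in
lemma phiX_span (t : Fin N) :
    φ (X t) ∈ Submodule.span K
      {q : MvPolynomial (Fin N) K | ∃ ν, Adm w t ν ∧ q = monomial ν 1} := by
  classical
  rw [hφX t]
  apply Submodule.add_mem
  · apply Submodule.sum_mem
    intro s _
    by_cases h : a t s = 0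
    · rw [h, map_zero, zero_mul]; exact Submodule.zero_mem _
    · have hws : w s = w t := by
        by_contra hc
        exact h (hw0 t s (fun he => hc he.symm))
      have hle : s ≤ t := le_of_not_gt (fun hc => h (htri t s hc))
      have hX : (X s : MvPolynomial (Fin N) K) = monomial (Finsupp.single s 1) 1 := rfl
      rw [hX, ← smul_eq_C_mul]
      exact Submodule.smul_mem _ _
        (Submodule.subset_span ⟨Finsupp.single s 1, Or.inl ⟨s, hle, hws, rfl⟩, rfl⟩)
  · nth_rw 1 [(ψ t).as_sum]
    apply Submodule.sum_mem
    intro ν hν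
    have h1 : monomial ν (coeff ν (ψ t)) = (coeff ν (ψ t)) • monomial ν (1:K) := by
      rw [smul_eq_C_mul, C_mul_monomial, mul_one]
    rw [h1]
    apply Submodule.smul_mem
    apply Submodule.subset_span
    refine ⟨ν, Or.inr ⟨(hψ t).1 (mem_support_iff.mp hν), fun s hs => ?_⟩, rfl⟩
    have : s ∈ (ψ t).vars := (mem_vars s).mpr ⟨ν, hν, hs⟩
    exact (mem_supported.mp (hψ t).2) this

include hw0 htri hψ hφX in
lemma prod_step (hSS : StronglyStable w I) :
    ∀ n : ℕ, ∀ σ μ : Fin N →₀ ℕ, (∑ i, σ i) = n → σ ≤ μ → monomial μ (1:K) ∈ I →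
      (∏ i, (φ (X i)) ^ (σ i)) * monomial (μ - σ) (1:K) ∈ I := by
  classical
  intro n
  induction n with
  | zero =>
    intro σ μ hsum hle hμ
    have hσ : σ = 0 := by
      ext i
      have := Finset.sum_eq_zero_iff.mp hsum i (Finset.mem_univ i)
      simpa using this
    subst hσ
    simp only [Finsupp.coe_zero, Pi.zero_apply, pow_zero, Finset.prod_const_one, one_mul,
      tsub_zero]
    exact hμ
  | succ n IH =>
    intro σ μ hsum hle hμ
    have hex : ∃ t, σ t ≠ 0 := by
      by_contra hc
      push_neg at hc
      rw [Finset.sum_eq_zero (fun i _ => hc i)] at hsum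
      omega
    obtain ⟨t, hσt⟩ := hex
    set σ' := σ - Finsupp.single t 1 with hσ'
    have hσ'app : ∀ i, σ' i = σ i - (Finsupp.single t 1) i := fun i => Finsupp.tsub_apply _ _ _
    have hfact : (∏ i, (φ (X i)) ^ (σ i))
        = φ (X t) * ∏ i, (φ (X i)) ^ (σ' i) := by
      have hσeq : ∀ i, σ i = σ' i + (Finsupp.single t 1) i := by
        intro i
        rw [hσ'app i]
        by_cases hi : i = t
        · subst hi; rw [Finsupp.single_eq_same]; omega
        · rw [Finsupp.single_eq_of_ne' (fun h => hi h.symm)]; omega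
      calc (∏ i, (φ (X i)) ^ (σ i))
          = ∏ i, ((φ (X i)) ^ (σ' i) * (φ (X i)) ^ ((Finsupp.single t 1) i)) := by
            apply Finset.prod_congr rfl
            intro i _
            rw [← pow_add, ← hσeq i]
        _ = (∏ i, (φ (X i)) ^ (σ' i)) * ∏ i, (φ (X i)) ^ ((Finsupp.single t 1) i) := by
            rw [Finset.prod_mul_distrib]
        _ = φ (X t) * ∏ i, (φ (X i)) ^ (σ' i) := by
            rw [mul_comm]
            congr 1
            rw [Finset.prod_eq_single t]
            · rw [Finsupp.single_eq_same, pow_one]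
            · intro i _ hi
              rw [Finsupp.single_eq_of_ne' (fun h => hi h.symm), pow_zero]
            · intro h; exact absurd (Finset.mem_univ t) h
    rw [hfact, mul_assoc]
    have hκ : φ (X t) ∈ Submodule.comap
        (LinearMap.mulRight K ((∏ i, (φ (X i)) ^ (σ' i)) * monomial (μ - σ) (1:K)))
        (Submodule.restrictScalars K I) := by
      apply Submodule.span_le.mpr _ (phiX_span w φ a ψ hw0 htri hψ hφX t)
      rintro q ⟨ν, hAdm, rfl⟩
      simp only [SetLike.mem_coe, Submodule.mem_comap, LinearMap.mulRight_apply,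
        Submodule.restrictScalars_mem]
      set μν := μ - Finsupp.single t 1 + ν with hμν
      have hμt : μ t ≠ 0 := by
        have h1 := Finsupp.le_def.mp hle t
        omega
      have hμνI : monomial μν (1:K) ∈ I := adm_step w I hSS hAdm hμ hμt
      have hσ'le : σ' ≤ μν := by
        rw [Finsupp.le_def]
        intro i
        have h1 := Finsupp.le_def.mp hle i
        rw [hσ'app i, hμν, Finsupp.add_apply, Finsupp.tsub_apply]
        by_cases hi : i = t
        · subst hi; rw [Finsupp.single_eq_same]; omega
        · rw [Finsupp.single_eq_of_ne' (fun h => hi h.symm)]; omega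
      have hsum' : (∑ i, σ' i) = n := by
        have h1 : (∑ i ∈ Finset.univ \ {t}, σ i) + σ t = n + 1 := by
          rw [← Finset.sum_eq_sum_sdiff_singleton_add (Finset.mem_univ t)]
          exact hsum
        have h2 : (∑ i, σ' i) = (∑ i ∈ Finset.univ \ {t}, σ' i) + σ' t :=
          Finset.sum_eq_sum_sdiff_singleton_add (Finset.mem_univ t) _
        have h3 : ∀ i ∈ Finset.univ \ {t}, σ' i = σ i := by
          intro i hi
          have hi2 : i ≠ t := by
            rw [Finset.mem_sdiff, Finset.mem_singleton] at hi
            exact hi.2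
          rw [hσ'app i, Finsupp.single_eq_of_ne' (fun h => hi2 h.symm)]
          omega
        rw [h2, Finset.sum_congr rfl h3]
        have h4 : σ' t = σ t - 1 := by rw [hσ'app t, Finsupp.single_eq_same]
        have h5 : (Finset.univ \ {t}).sum ⇑σ = ∑ i ∈ Finset.univ \ {t}, σ i := rfl
        have h6 := Finsupp.le_def.mp hle t
        omega
      have hdiff : μν - σ' = μ - σ + ν := by
        ext i
        have h1 := Finsupp.le_def.mp hle i
        simp only [Finsupp.tsub_apply, Finsupp.add_apply, hμν, hσ'app i]
        by_cases hi : i = t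
        · subst hi; rw [Finsupp.single_eq_same]; omega
        · rw [Finsupp.single_eq_of_ne' (fun h => hi h.symm)]; omega
      have := IH σ' μν hsum' hσ'le hμνI
      rw [hdiff] at this
      have heq : monomial ν (1:K) * ((∏ i, (φ (X i)) ^ (σ' i)) * monomial (μ - σ) (1:K))
          = (∏ i, (φ (X i)) ^ (σ' i)) * monomial (μ - σ + ν) (1:K) := by
        rw [mul_comm (monomial ν (1:K)) _, mul_assoc, monomial_mul, one_mul]
      rw [heq]
      exact this
    simpa only [Submodule.mem_comap, LinearMap.mulRight_apply,
      Submodule.restrictScalars_mem] using hκ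

include hw0 htri hψ hφX in
lemma map_le_of_ss (hSS : StronglyStable w I) : Ideal.map φ.toAlgHom I ≤ I := by
  classical
  obtain ⟨A, hA⟩ := hSS.1
  have hgen : ∀ μ, monomial μ (1:K) ∈ I → φ (monomial μ (1:K)) ∈ I := by
    intro μ hμ
    have h1 : monomial μ (1:K) = ∏ i, (X i : MvPolynomial (Fin N) K) ^ μ i := by
      rw [monomial_eq, Finsupp.prod_fintype _ _ (fun i => pow_zero _), map_one, one_mul]
    have h2 : φ (monomial μ (1:K)) = ∏ i, (φ (X i)) ^ μ i := by
      rw [h1, map_prod]; simp_rw [map_pow]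
    have h3 := prod_step w I φ a ψ hw0 htri hψ hφX hSS (∑ i, μ i) μ μ rfl le_rfl hμ
    rw [tsub_self] at h3
    have h4 : monomial (0 : Fin N →₀ ℕ) (1:K) = 1 := by
      rw [monomial_zero', C_1]
    rw [h4, mul_one] at h3
    rw [h2]
    exact h3
  conv_lhs => rw [hA]
  rw [Ideal.map_span, Ideal.span_le]
  rintro g ⟨g', ⟨μ, hμ, rfl⟩, rfl⟩
  have hmem : monomial μ (1:K) ∈ I := by
    rw [hA]; exact Ideal.subset_span ⟨μ, hμ, rfl⟩
  exact hgen μ hmem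
end Backward2

section Backward3
variable [CharZero K] (w : Fin N → ℕ) (hpos : ∀ k, 0 < w k)
  (I : Ideal (MvPolynomial (Fin N) K))

include hpos

lemma weight_set_finite (d : ℕ) :
    {μ : Fin N →₀ ℕ | Finsupp.weight w μ = d}.Finite := by
  classical
  apply Set.Finite.subset (Set.finite_Iic (Finsupp.equivFunOnFinite.symm (fun _ : Fin N => d)))
  intro μ hμ
  rw [Set.mem_Iic, Finsupp.le_def]
  intro i
  have h1 : Finsupp.weight w μ = ∑ j, μ j * w j := by
    rw [Finsupp.weight_apply,
      Finsupp.sum_fintype μ (fun i c => c • w i) (fun i => zero_smul ℕ (w i))]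
    simp [smul_eq_mul]
  have h2 : μ i * w i ≤ ∑ j, μ j * w j :=
    Finset.single_le_sum (f := fun j => μ j * w j) (fun j _ => Nat.zero_le _)
      (Finset.mem_univ i)
  have h3 : μ i ≤ μ i * w i := Nat.le_mul_of_pos_right _ (hpos i)
  have h4 : Finsupp.weight w μ = d := hμ
  simp only [Finsupp.coe_equivFunOnFinite_symm]
  omega

lemma hom_findim (d : ℕ) :
    FiniteDimensional K (weightedHomogeneousSubmodule K w d :
      Submodule K (MvPolynomial (Fin N) K)) := by
  classical
  have hle : (weightedHomogeneousSubmodule K w d : Submodule K (MvPolynomial (Fin N) K))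
      ≤ Submodule.span K ((fun μ => (monomial μ (1:K) : MvPolynomial (Fin N) K)) ''
        {μ : Fin N →₀ ℕ | Finsupp.weight w μ = d}) := by
    intro p hp
    rw [mem_weightedHomogeneousSubmodule] at hp
    nth_rw 1 [p.as_sum]
    apply Submodule.sum_mem
    intro μ hμ
    have h1 : monomial μ (coeff μ p) = (coeff μ p) • monomial μ (1:K) := by
      rw [smul_eq_C_mul, C_mul_monomial, mul_one]
    rw [h1]
    exact Submodule.smul_mem _ _
      (Submodule.subset_span ⟨μ, hp (mem_support_iff.mp hμ), rfl⟩)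
  have := FiniteDimensional.span_of_finite K ((weight_set_finite w hpos d).image
    (fun μ => (monomial μ (1:K) : MvPolynomial (Fin N) K)))
  exact Submodule.finiteDimensional_of_le hle

variable (φ : MvPolynomial (Fin N) K ≃ₐ[K] MvPolynomial (Fin N) K)

lemma le_map_of_graded
    (hmapmem : ∀ x ∈ I, φ x ∈ I)
    (hhom : ∀ d : ℕ, ∀ p : MvPolynomial (Fin N) K, p.IsWeightedHomogeneous w d →
      (φ p).IsWeightedHomogeneous w d)
    (hI : ∀ f ∈ I, ∀ d : ℕ, weightedHomogeneousComponent w d f ∈ I) :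
    I ≤ Ideal.map φ.toAlgHom I := by
  classical
  have main : ∀ d : ℕ, ∀ p ∈ I, p.IsWeightedHomogeneous w d →
      p ∈ Ideal.map φ.toAlgHom I := by
    intro d p hpI hphom
    set V : Submodule K (MvPolynomial (Fin N) K) :=
      (Submodule.restrictScalars K I) ⊓ (weightedHomogeneousSubmodule K w d) with hV
    haveI : FiniteDimensional K V := by
      have := hom_findim w hpos (K := K) d
      exact Submodule.finiteDimensional_of_le inf_le_right
    have hmaps : ∀ x ∈ V, φ x ∈ V := by
      intro x hx
      rw [hV, Submodule.mem_inf] at hx ⊢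
      exact ⟨hmapmem x hx.1, hhom d x hx.2⟩
    set e : V →ₗ[K] V := (φ.toLinearMap : MvPolynomial (Fin N) K →ₗ[K] _).restrict hmaps
      with he
    have hinj : Function.Injective e := by
      intro x y hxy
      apply Subtype.ext
      apply φ.injective
      have := congrArg (Subtype.val) hxy
      exact this
    have hsurj := LinearMap.injective_iff_surjective.mp hinj
    obtain ⟨q, hq⟩ := hsurj ⟨p, Submodule.mem_inf.mpr ⟨hpI, hphom⟩⟩
    have hq2 : φ q.val = p := congrArg Subtype.val hq
    rw [← hq2]
    exact Ideal.mem_map_of_mem φ.toAlgHom (Submodule.mem_inf.mp q.2).1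
  intro f hf
  rw [← sum_weightedHomogeneousComponent w f,
    finsum_eq_sum _ (weightedHomogeneousComponent_finsupp f)]
  apply Submodule.sum_mem
  intro d _
  exact main d _ (hI f hf d) (weightedHomogeneousComponent_isWeightedHomogeneous d f)
end Backward3

end Aux

/-- **T-fixed ideals are exactly the strongly stable ideals.**
A homogeneous ideal `I` of a weighted polynomial ring over an infinite field of
characteristic `0` is fixed by every upper triangular graded automorphism if and only if
it is a strongly stable (monomial) ideal. -/
theorem t_fixed_iff_strongly_stable
    (K : Type*) [Field K] [CharZero K]
    (N : ℕ) (w : Fin N → ℕ) (hpos : ∀ k, 0 < w k) (hmono : Monotone w)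
    (I : Ideal (MvPolynomial (Fin N) K))
    (hI : ∀ f ∈ I, ∀ d : ℕ, weightedHomogeneousComponent w d f ∈ I) :
    (∀ φ : MvPolynomial (Fin N) K ≃ₐ[K] MvPolynomial (Fin N) K,
      (∃ (a : Matrix (Fin N) (Fin N) K) (ψ : Fin N → MvPolynomial (Fin N) K),
        IsUnit a ∧
        (∀ t s, w t ≠ w s → a t s = 0) ∧
        (∀ t s, t < s → a t s = 0) ∧
        (∀ t, (ψ t).IsWeightedHomogeneous w (w t) ∧
          ψ t ∈ MvPolynomial.supported K {s : Fin N | w s < w t}) ∧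
        (∀ t, φ (X t) = (∑ s, C (a t s) * X s) + ψ t)) →
      Ideal.map φ.toAlgHom I = I)
    ↔ StronglyStable w I := by
  constructor
  · intro hfix
    exact forward_dir w I hfix
  · intro hSS φ hcert
    obtain ⟨a, ψ, ha, hw0, htri, hψ, hφX⟩ := hcert
    have hle1 : Ideal.map φ.toAlgHom I ≤ I :=
      map_le_of_ss w I φ a ψ hw0 htri hψ hφX hSS
    have hmapmem : ∀ x ∈ I, φ x ∈ I := fun x hx =>
      hle1 (Ideal.mem_map_of_mem φ.toAlgHom hx)
    have hhom : ∀ d : ℕ, ∀ p : MvPolynomial (Fin N) K, p.IsWeightedHomogeneous w d →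
        (φ p).IsWeightedHomogeneous w d := fun d p hp =>
      phi_hom w φ a ψ hw0 hψ hφX hp
    exact le_antisymm hle1 (le_map_of_graded w hpos I φ hmapmem hhom hI)
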